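/- Let P be an orthogonal projection on ℂ^E, L Hermitian with P^⊥ L P^⊥ = L, and k real with |k| > ‖L‖. Then (P + L + ik P^⊥)^{-1} = P - (i/k) Σ_{r=0}^∞ k^{-r} P^⊥ (iL)^r P^⊥, the series converging absolutely. -/

import Mathlib

open Matrix Complex

attribute [local instance] Matrix.linftyOpNormedRing
attribute [local instance] Matrix.linftyOpNormedAlgebra

set_option maxHeartbeats 1000000 in
/-- For `|k| > ‖L‖`, the inverse of `P + L + ik P^⊥` is given by the absolutely
convergent Neumann-type series `P - (i/k) Σ_{r≥0} k^{-r} P^⊥ (iL)^r P^⊥`. -/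
theorem inverse_series_expansion
    (E : ℕ) (P L : Matrix (Fin E) (Fin E) ℂ)
    (hP : P.IsHermitian) (hP2 : P * P = P)
    (hL : L.IsHermitian) (hLP : (1 - P) * L * (1 - P) = L)
    (k : ℝ) (hk : ‖L‖ < |k|) :
    Summable
      (fun r : ℕ => ‖((k : ℂ) ^ (-(r : ℤ))) •
          ((1 - P) * (Complex.I • L) ^ r * (1 - P))‖) ∧
    (P + L + (Complex.I * (k : ℂ)) • (1 - P))⁻¹
      = P - (Complex.I / (k : ℂ)) •
          ∑' r : ℕ, ((k : ℂ) ^ (-(r : ℤ))) •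
            ((1 - P) * (Complex.I • L) ^ r * (1 - P)) := by
  have hk0 : (0:ℝ) < |k| := lt_of_le_of_lt (norm_nonneg L) hk
  have hkne : (k:ℝ) ≠ 0 := by simpa [abs_eq_zero] using ne_of_gt hk0
  have hkc : (k:ℂ) ≠ 0 := by exact_mod_cast hkne
  set Q : Matrix (Fin E) (Fin E) ℂ := 1 - P with hQdef
  set y : Matrix (Fin E) (Fin E) ℂ := ((k:ℂ)⁻¹) • (Complex.I • L) with hydef
  -- basic algebra
  have hQQ : Q * Q = Q := by
    simp only [hQdef, sub_mul, mul_sub, one_mul, mul_one, hP2]; abel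
  have hPQ : P * Q = 0 := by simp [hQdef, mul_sub, hP2]
  have hQP : Q * P = 0 := by simp [hQdef, sub_mul, hP2]
  have hLQ : L * Q = L := by
    nth_rewrite 1 [← hLP]
    rw [mul_assoc (Q * L), hQQ]
    exact hLP
  have hQL : Q * L = L := by
    nth_rewrite 1 [← hLP]
    rw [← mul_assoc, ← mul_assoc, hQQ]
    exact hLP
  have hLP0 : L * P = 0 := by
    have h : L * (Q * P) = L * P := by rw [← mul_assoc, hLQ]
    rw [← h, hQP, mul_zero]
  have hPL0 : P * L = 0 := by
    have h : (P * Q) * L = P * L := by rw [mul_assoc, hQL]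
    rw [← h, hPQ, zero_mul]
  -- term rewriting
  have hterm : ∀ r : ℕ, ((k : ℂ) ^ (-(r : ℤ))) • ((1 - P) * (Complex.I • L) ^ r * (1 - P))
      = Q * y ^ r * Q := by
    intro r
    have h1 : y ^ r = ((k:ℂ)⁻¹) ^ r • (Complex.I • L) ^ r := by rw [hydef, smul_pow]
    rw [h1, Matrix.mul_smul, Matrix.smul_mul]
    congr 1
    rw [_root_.zpow_neg, zpow_natCast, inv_pow]
  -- norm of y
  have hy : ‖y‖ < 1 := by
    rw [hydef, norm_smul, norm_smul, Complex.norm_I, one_mul]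
    have h : ‖(k:ℂ)⁻¹‖ = |k|⁻¹ := by
      rw [norm_inv]
      simp [Complex.norm_real, Real.norm_eq_abs]
    rw [h, inv_mul_eq_div, div_lt_one hk0]
    exact hk
  -- summability
  have hgeom : Summable (fun r : ℕ => y ^ r) := summable_geometric_of_norm_lt_one hy
  have hsum : Summable (fun r : ℕ => ‖Q * y ^ r * Q‖) := by
    rw [summable_norm_iff]
    exact (hgeom.mul_left Q).mul_right Q
  refine ⟨by simpa only [hQdef, hterm] using hsum, ?_⟩
  -- the inverse
  set G : Matrix (Fin E) (Fin E) ℂ := ∑' r : ℕ, y ^ r with hGdef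
  have htsum : (∑' r : ℕ, ((k : ℂ) ^ (-(r : ℤ))) •
      ((1 - P) * (Complex.I • L) ^ r * (1 - P))) = Q * G * Q := by
    simp_rw [hterm]
    rw [(hgeom.mul_left Q).tsum_mul_right Q, hgeom.tsum_mul_left Q]
  rw [htsum]
  apply Matrix.inv_eq_right_inv
  have hG1 : G - y * G = 1 := by
    have h := mul_neg_geom_series y hy
    rw [sub_mul, one_mul] at h
    exact h
  have hGy : G = 1 + y * G := by rw [← hG1]; abel
  have hQy : Q * y = y := by rw [hydef, Matrix.mul_smul, Matrix.mul_smul, hQL]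
  have hLy : L = (-(Complex.I * (k:ℂ))) • y := by
    rw [hydef, smul_smul, smul_smul]
    have h : -(Complex.I * (k:ℂ)) * (k:ℂ)⁻¹ * Complex.I
        = -(Complex.I * Complex.I) * ((k:ℂ) * (k:ℂ)⁻¹) := by ring
    rw [h, Complex.I_mul_I, mul_inv_cancel₀ hkc]
    norm_num
  have hA_P : (P + L + (Complex.I*(k:ℂ))•Q) * P = P := by
    rw [add_mul, add_mul, Matrix.smul_mul, hP2, hLP0, hQP]
    simp
  have hQGQ : Q * G * Q = Q + y * G * Q := by
    conv_lhs => rw [hGy]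
    rw [mul_add, mul_one, add_mul, hQQ, ← mul_assoc, hQy]
  have hA_S : (P + L + (Complex.I*(k:ℂ))•Q) * (Q * G * Q) = (Complex.I*(k:ℂ)) • Q := by
    rw [add_mul, add_mul, Matrix.smul_mul]
    simp only [← mul_assoc]
    rw [hPQ, hLQ, hQQ, Matrix.zero_mul, Matrix.zero_mul, zero_add]
    rw [hQGQ]
    conv_lhs => rw [hLy]
    rw [Matrix.smul_mul, Matrix.smul_mul, smul_add]
    module
  rw [mul_sub, hA_P, Matrix.mul_smul, hA_S, smul_smul]
  have h : Complex.I/(k:ℂ) * (Complex.I * k) = -1 := by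
    field_simp
    exact Complex.I_sq
  rw [h, neg_smul, one_smul, sub_neg_eq_add, hQdef]
  abel
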